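/- For every integer k ≥ 2, the sequence {b_k(n)/n!}_{n=0}^∞ is log-concave, i.e., (b_k(n)/n!)·(b_k(n+2)/(n+2)!) ≤ (b_k(n+1)/(n+1)!)² for all n ≥ 0. -/

import Mathlib

open scoped Nat

/-- The `k`-times iterated exponential function: `expIter 0 = id`,
`expIter (k+1) x = exp (expIter k x)`. -/
noncomputable def expIter : ℕ → ℝ → ℝ
  | 0 => id
  | k + 1 => fun x => Real.exp (expIter k x)

/-- `BellB k n` is the `n`-th derivative of the `k`-times iterated exponential at `0`,
so that `expIter k x = ∑ n, BellB k n * x ^ n / n !`. -/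
noncomputable def BellB (k n : ℕ) : ℝ := iteratedDeriv n (expIter k) 0

/-- The Bell numbers of order `k`: `bellOrd k n = BellB k n / expIter k 0`. -/
noncomputable def bellOrd (k n : ℕ) : ℝ := BellB k n / expIter k 0

open Finset
open scoped ContDiff

lemma contDiff_expIter (k : ℕ) : ContDiff ℝ ∞ (expIter k) := by
  induction k with
  | zero => exact contDiff_id
  | succ k ih => exact Real.contDiff_exp.comp ih

lemma differentiable_expIter (k : ℕ) : Differentiable ℝ (expIter k) :=
  (contDiff_expIter k).differentiable (by norm_num)

lemma contDiff_deriv_expIter (k : ℕ) : ContDiff ℝ ∞ (deriv (expIter k)) :=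
  (contDiff_infty_iff_deriv.mp (contDiff_expIter k)).2

lemma deriv_expIter_succ (k : ℕ) :
    deriv (expIter (k + 1)) = fun x => expIter (k + 1) x * deriv (expIter k) x := by
  funext x
  have h : HasDerivAt (expIter k) (deriv (expIter k) x) x :=
    (differentiable_expIter k x).hasDerivAt
  exact h.exp.deriv

lemma expIter_one : expIter 1 = Real.exp := rfl

lemma iteratedDeriv_deriv_expIter_one (j : ℕ) :
    iteratedDeriv j (deriv (expIter 1)) 0 = 1 := by
  rw [expIter_one, Real.deriv_exp, iteratedDeriv_eq_iterate, Real.iter_deriv_exp, Real.exp_zero]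

lemma iteratedDeriv_add_apply' {n : ℕ} {f g : ℝ → ℝ} (hf : ContDiff ℝ ∞ f)
    (hg : ContDiff ℝ ∞ g) (x : ℝ) :
    iteratedDeriv n (fun y => f y + g y) x = iteratedDeriv n f x + iteratedDeriv n g x := by
  have h1 : (fun y => f y + g y) = f + g := rfl
  rw [h1, ← iteratedDerivWithin_univ, ← iteratedDerivWithin_univ, ← iteratedDerivWithin_univ]
  have hn : (n : WithTop ℕ∞) ≤ ∞ := by
    exact_mod_cast (le_top : (n : ℕ∞) ≤ ⊤)
  exact iteratedDerivWithin_add (Set.mem_univ x) uniqueDiffOn_univ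
    ((hf.of_le hn).contDiffAt.contDiffWithinAt) ((hg.of_le hn).contDiffAt.contDiffWithinAt)

lemma iteratedDeriv_mul_apply (n : ℕ) :
    ∀ (f g : ℝ → ℝ), ContDiff ℝ ∞ f → ContDiff ℝ ∞ g → ∀ x : ℝ,
    iteratedDeriv n (fun y => f y * g y) x =
      ∑ j ∈ range (n + 1), (n.choose j : ℝ) * iteratedDeriv j f x * iteratedDeriv (n - j) g x := by
  induction n with
  | zero => intro f g hf hg x; simp
  | succ n ih =>
    intro f g hf hg x
    have hfd : Differentiable ℝ f := (contDiff_infty_iff_deriv.mp hf).1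
    have hgd : Differentiable ℝ g := (contDiff_infty_iff_deriv.mp hg).1
    have hf' : ContDiff ℝ ∞ (deriv f) := (contDiff_infty_iff_deriv.mp hf).2
    have hg' : ContDiff ℝ ∞ (deriv g) := (contDiff_infty_iff_deriv.mp hg).2
    have hd : deriv (fun y => f y * g y) = fun y => deriv f y * g y + f y * deriv g y :=
      funext fun y => deriv_mul (hfd y) (hgd y)
    rw [iteratedDeriv_succ', hd,
      iteratedDeriv_add_apply' (hf'.mul hg) (hf.mul hg') x,
      ih (deriv f) g hf' hg x, ih f (deriv g) hf hg' x]
    have e1 : ∀ j, iteratedDeriv j (deriv f) x = iteratedDeriv (j+1) f x := by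
      intro j; rw [iteratedDeriv_succ']
    have e2 : ∀ j, iteratedDeriv j (deriv g) x = iteratedDeriv (j+1) g x := by
      intro j; rw [iteratedDeriv_succ']
    -- abbreviations
    set A : ℕ → ℝ := fun j => iteratedDeriv j f x with hA
    set B : ℕ → ℝ := fun j => iteratedDeriv j g x with hB
    have lhs1 : ∑ j ∈ range (n + 1), (n.choose j : ℝ) * iteratedDeriv j (deriv f) x *
        B (n - j) = ∑ j ∈ range (n + 1), (n.choose j : ℝ) * A (j+1) * B (n - j) := by
      refine sum_congr rfl fun j hj => by rw [e1]
    have lhs2 : ∑ j ∈ range (n + 1), (n.choose j : ℝ) * A j * iteratedDeriv (n - j) (deriv g) x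
        = ∑ j ∈ range (n + 1), (n.choose j : ℝ) * A j * B (n + 1 - j) := by
      refine sum_congr rfl fun j hj => ?_
      have hj' : j ≤ n := Nat.lt_succ_iff.mp (mem_range.mp hj)
      rw [e2, show n - j + 1 = n + 1 - j by omega]
    rw [lhs1, lhs2]
    have hS2 : ∑ j ∈ range (n + 1), (n.choose j : ℝ) * A j * B (n + 1 - j)
        = (∑ i ∈ range n, (n.choose (i+1) : ℝ) * A (i+1) * B (n - i)) + A 0 * B (n+1) := by
      rw [Finset.sum_range_succ' (fun j => (n.choose j : ℝ) * A j * B (n + 1 - j)) n]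
      simp only [Nat.choose_zero_right, Nat.cast_one, one_mul, Nat.sub_zero]
      congr 1
      refine sum_congr rfl fun i hi => ?_
      have hi' : i < n := mem_range.mp hi
      rw [show n + 1 - (i + 1) = n - i by omega]
    have hRHS : ∑ j ∈ range (n + 2), ((n+1).choose j : ℝ) * A j * B (n + 1 - j)
        = (∑ i ∈ range (n + 1), ((n+1).choose (i+1) : ℝ) * A (i+1) * B (n - i))
          + A 0 * B (n+1) := by
      rw [Finset.sum_range_succ' (fun j => ((n+1).choose j : ℝ) * A j * B (n + 1 - j)) (n+1)]
      simp only [Nat.choose_zero_right, Nat.cast_one, one_mul, Nat.sub_zero]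
      congr 1
      refine sum_congr rfl fun i hi => ?_
      rw [show n + 1 - (i + 1) = n - i by omega]
    have pascal : ∀ i : ℕ, ((n+1).choose (i+1) : ℝ) = (n.choose i : ℝ) + (n.choose (i+1) : ℝ) := by
      intro i
      rw [Nat.choose_succ_succ]
      push_cast
      ring
    have hsplit : ∑ i ∈ range (n + 1), ((n+1).choose (i+1) : ℝ) * A (i+1) * B (n - i)
        = ∑ i ∈ range (n + 1), (n.choose i : ℝ) * A (i+1) * B (n - i)
          + ∑ i ∈ range (n + 1), (n.choose (i+1) : ℝ) * A (i+1) * B (n - i) := by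
      rw [← Finset.sum_add_distrib]
      exact sum_congr rfl fun i hi => by rw [pascal]; ring
    have hlast : ∑ i ∈ range (n + 1), (n.choose (i+1) : ℝ) * A (i+1) * B (n - i)
        = ∑ i ∈ range n, (n.choose (i+1) : ℝ) * A (i+1) * B (n - i) := by
      rw [Finset.sum_range_succ]
      simp
    rw [hS2, hRHS, hsplit, hlast]
    ring

/-- Taylor coefficients of `deriv (expIter k)` at 0. -/
noncomputable def ggc (k j : ℕ) : ℝ := iteratedDeriv j (deriv (expIter k)) 0 / j !

/-- Normalized Taylor coefficients of `expIter k` at 0. -/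
noncomputable def ccc (k n : ℕ) : ℝ := iteratedDeriv n (expIter k) 0 / (n ! * expIter k 0)

lemma expIter_zero_pos (k : ℕ) : 0 < expIter (k + 1) 0 := Real.exp_pos _

lemma expIter_zero_nonneg (k : ℕ) : 0 ≤ expIter k 0 := by
  cases k with
  | zero => exact le_refl 0
  | succ k => exact (expIter_zero_pos k).le

lemma two_le_expIter_zero (k : ℕ) : 2 ≤ expIter (k + 2) 0 := by
  have h1 : (1 : ℝ) ≤ expIter (k + 1) 0 := by
    show (1:ℝ) ≤ Real.exp (expIter k 0)
    exact Real.one_le_exp (expIter_zero_nonneg k)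
  show (2:ℝ) ≤ Real.exp (expIter (k+1) 0)
  calc (2:ℝ) = 1 + 1 := by norm_num
  _ ≤ 1 + expIter (k+1) 0 := by linarith
  _ ≤ Real.exp (expIter (k+1) 0) := by
      have := Real.add_one_le_exp (expIter (k+1) 0)
      linarith

lemma ccc_zero (k : ℕ) : ccc (k + 1) 0 = 1 := by
  unfold ccc
  rw [iteratedDeriv_zero]
  have := (expIter_zero_pos k).ne'
  field_simp
  simp

lemma ccc_rec (k n : ℕ) :
    ((n : ℝ) + 1) * ccc (k + 1) (n + 1) =
      ∑ j ∈ range (n + 1), ggc k j * ccc (k + 1) (n - j) := by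
  have hE : expIter (k + 1) 0 ≠ 0 := (expIter_zero_pos k).ne'
  have key : iteratedDeriv (n + 1) (expIter (k + 1)) 0 =
      ∑ j ∈ range (n + 1), (n.choose j : ℝ) * iteratedDeriv j (deriv (expIter k)) 0 *
        iteratedDeriv (n - j) (expIter (k + 1)) 0 := by
    rw [iteratedDeriv_succ', deriv_expIter_succ k]
    have hcomm : (fun x => expIter (k+1) x * deriv (expIter k) x)
        = fun x => deriv (expIter k) x * expIter (k+1) x := by
      funext y; ring
    rw [hcomm]
    exact iteratedDeriv_mul_apply n (deriv (expIter k)) (expIter (k+1))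
      (contDiff_deriv_expIter k) (contDiff_expIter (k+1)) 0
  have hL : ((n : ℝ) + 1) * ccc (k + 1) (n + 1)
      = iteratedDeriv (n + 1) (expIter (k + 1)) 0 / (n ! * expIter (k+1) 0) := by
    unfold ccc
    rw [Nat.factorial_succ]
    push_cast
    have h1 : (n ! : ℝ) ≠ 0 := by positivity
    field_simp
  rw [hL, key, Finset.sum_div]
  refine sum_congr rfl fun j hj => ?_
  have hj' : j ≤ n := Nat.lt_succ_iff.mp (mem_range.mp hj)
  unfold ggc ccc
  have hfac : (n.choose j : ℝ) * j ! * (n - j)! = n ! := by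
    exact_mod_cast congrArg (Nat.cast : ℕ → ℝ) (Nat.choose_mul_factorial_mul_factorial hj')
  have h1 : (j ! : ℝ) ≠ 0 := by positivity
  have h2 : ((n-j)! : ℝ) ≠ 0 := by positivity
  have h3 : (n ! : ℝ) ≠ 0 := by positivity
  have hC : (n.choose j : ℝ) ≠ 0 := by
    exact_mod_cast (Nat.choose_pos hj').ne'
  rw [← hfac]
  field_simp

section Abstract

variable {g c : ℕ → ℝ}

lemma g_ratio_mono (hpos : ∀ j, 0 < g j) (hLC : ∀ j, g j * g (j+2) ≤ g (j+1)^2) :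
    ∀ i j, i ≤ j → g (j+1) * g i ≤ g (i+1) * g j := by
  intro i j
  induction j with
  | zero =>
    intro hij
    have : i = 0 := Nat.le_zero.mp hij
    subst this
    exact le_rfl
  | succ j ih =>
    intro hij
    rcases eq_or_lt_of_le hij with h | h
    · subst h; exact le_rfl
    · have hij' : i ≤ j := Nat.lt_succ_iff.mp h
      have h1 := ih hij'
      have hA := hLC j
      have hXY : (g (j+2) * g i) * (g j * g (j+1)) ≤ (g (i+1) * g (j+1)) * (g j * g (j+1)) := by
        calc (g (j+2) * g i) * (g j * g (j+1)) = (g j * g (j+2)) * (g (j+1) * g i) := by ring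
        _ ≤ (g (j+1)^2) * (g (i+1) * g j) :=
            mul_le_mul hA h1 (mul_pos (hpos (j+1)) (hpos i)).le (sq_nonneg _)
        _ = (g (i+1) * g (j+1)) * (g j * g (j+1)) := by ring
      exact le_of_mul_le_mul_right hXY (mul_pos (hpos j) (hpos (j+1)))

lemma g_succ_le (hpos : ∀ j, 0 < g j) (hLC : ∀ j, g j * g (j+2) ≤ g (j+1)^2)
    (hg1 : g 1 ≤ g 0 ^ 2) : ∀ j, g (j+1) ≤ g 0 * g j := by
  intro j
  have h1 := g_ratio_mono hpos hLC 0 j (Nat.zero_le j)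
  have h2 : g 1 * g j ≤ g 0 ^ 2 * g j := mul_le_mul_of_nonneg_right hg1 (hpos j).le
  have : g (j+1) * g 0 ≤ (g 0 * g j) * g 0 := by nlinarith
  exact le_of_mul_le_mul_right this (hpos 0)

/-- ratio lemma: if log-concavity holds below `b`, ratios compare across `a ≤ b`. -/
lemma c_ratio (hcpos : ∀ n, 0 < c n) :
    ∀ a b, a ≤ b → (∀ i, i < b → c i * c (i+2) ≤ c (i+1)^2) →
      c a * c (b+1) ≤ c (a+1) * c b := by
  intro a b hab
  induction b, hab using Nat.le_induction with
  | base => intro _; exact le_of_eq (mul_comm _ _)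
  | succ b hab ih =>
    intro hLCc
    have prev : c a * c (b+1) ≤ c (a+1) * c b := ih (fun i hi => hLCc i (by omega))
    have hlc := hLCc b (by omega)
    have key : (c a * c (b+2)) * c b ≤ (c (a+1) * c (b+1)) * c b := by
      calc (c a * c (b+2)) * c b = c a * (c b * c (b+2)) := by ring
      _ ≤ c a * c (b+1)^2 := mul_le_mul_of_nonneg_left hlc (hcpos a).le
      _ = (c a * c (b+1)) * c (b+1) := by ring
      _ ≤ (c (a+1) * c b) * c (b+1) := mul_le_mul_of_nonneg_right prev (hcpos (b+1)).le
      _ = (c (a+1) * c (b+1)) * c b := by ring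
    exact le_of_mul_le_mul_right key (hcpos b)

/-- square split: sum over a square equals strict upper + strict lower + diagonal. -/
lemma sq_split (N : ℕ) (f : ℕ → ℕ → ℝ) :
    ∑ q ∈ range N, ∑ p ∈ range N, f p q
      = (∑ q ∈ range N, ∑ p ∈ range q, f p q) + (∑ q ∈ range N, ∑ p ∈ range q, f q p)
        + ∑ p ∈ range N, f p p := by
  induction N with
  | zero => simp
  | succ N ih =>
    have h1 : ∑ q ∈ range (N+1), ∑ p ∈ range (N+1), f p q
        = (∑ q ∈ range N, ∑ p ∈ range N, f p q) + ∑ q ∈ range N, f N q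
          + (∑ p ∈ range N, f p N + f N N) := by
      rw [Finset.sum_range_succ]
      congr 1
      · rw [← Finset.sum_add_distrib]
        exact sum_congr rfl fun q hq => Finset.sum_range_succ _ _
      · exact Finset.sum_range_succ _ _
    have h2 : ∑ q ∈ range (N+1), ∑ p ∈ range q, f p q
        = (∑ q ∈ range N, ∑ p ∈ range q, f p q) + ∑ p ∈ range N, f p N :=
      Finset.sum_range_succ _ _
    have h3 : ∑ q ∈ range (N+1), ∑ p ∈ range q, f q p
        = (∑ q ∈ range N, ∑ p ∈ range q, f q p) + ∑ p ∈ range N, f N p :=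
      Finset.sum_range_succ _ _
    have h4 : ∑ p ∈ range (N+1), f p p = (∑ p ∈ range N, f p p) + f N N :=
      Finset.sum_range_succ _ _
    rw [h1, h2, h3, h4, ih]
    ring

set_option maxHeartbeats 1000000 in
lemma lc_step (hpos : ∀ j, 0 < g j) (hLC : ∀ j, g j * g (j+2) ≤ g (j+1)^2)
    (hc0 : c 0 = 1) (hcpos : ∀ m, 0 < c m)
    (hrec : ∀ n : ℕ, ((n : ℝ) + 1) * c (n+1) = ∑ j ∈ range (n+1), g j * c (n - j))
    (hUp : ∀ m, c (m+1) ≤ g 0 * c m)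
    (n : ℕ) (ih : ∀ m, m < n → c m * c (m+2) ≤ c (m+1)^2) :
    c n * c (n+2) ≤ c (n+1)^2 := by
  classical
  set b : ℕ → ℝ := fun t => if t = 0 then 0 else c (t-1) with hbdef
  have hb0 : b 0 = 0 := by simp [hbdef]
  have hbs : ∀ t, b (t+1) = c t := by intro t; simp [hbdef]
  have hbnn : ∀ t, 0 ≤ b t := by
    intro t
    cases t with
    | zero => rw [hb0]
    | succ t => rw [hbs]; exact (hcpos t).le
  set F : ℕ → ℕ → ℝ := fun p q => g p * g q * b (n+1-p) * b (n+1-q) with hFdef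
  set G : ℕ → ℕ → ℝ := fun p q => g p * g q * b (n-p) * b (n+2-q) with hGdef
  have hFv : ∀ p q, F p q = g p * g q * b (n+1-p) * b (n+1-q) := fun p q => rfl
  have hGv : ∀ p q, G p q = g p * g q * b (n-p) * b (n+2-q) := fun p q => rfl
  -- sum identities for single sums
  have hs1 : ∑ p ∈ range (n+2), g p * b (n+1-p) = ((n:ℝ)+1) * c (n+1) := by
    rw [Finset.sum_range_succ]
    have e0 : n + 1 - (n+1) = 0 := by omega
    rw [e0, hb0, mul_zero, add_zero, hrec n]
    refine sum_congr rfl fun p hp => ?_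
    have hp' : p ≤ n := Nat.lt_succ_iff.mp (mem_range.mp hp)
    rw [show n + 1 - p = (n - p) + 1 by omega, hbs]
  have hs2 : ∑ p ∈ range (n+2), g p * b (n-p) = (n:ℝ) * c n := by
    cases n with
    | zero =>
      simp [hb0]
    | succ m =>
      rw [Finset.sum_range_succ, Finset.sum_range_succ]
      have e1 : m + 1 - (m+1) = 0 := by omega
      have e2 : m + 1 - (m+2) = 0 := by omega
      rw [e1, e2, hb0, mul_zero, mul_zero, add_zero, add_zero]
      have := hrec m
      push_cast
      rw [show ∑ p ∈ range (m+1), g p * b (m + 1 - p)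
          = ∑ p ∈ range (m+1), g p * c (m - p) from
        sum_congr rfl fun p hp => by
          have hp' : p ≤ m := Nat.lt_succ_iff.mp (mem_range.mp hp)
          rw [show m + 1 - p = (m - p) + 1 by omega, hbs]]
      rw [← this]
  have hs3 : ∑ q ∈ range (n+2), g q * b (n+2-q) = ((n:ℝ)+2) * c (n+2) := by
    have := hrec (n+1)
    push_cast at this
    rw [show ∑ q ∈ range (n+2), g q * b (n+2-q)
        = ∑ q ∈ range (n+2), g q * c (n+1-q) from
      sum_congr rfl fun q hq => by
        have hq' : q ≤ n+1 := Nat.lt_succ_iff.mp (mem_range.mp hq)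
        rw [show n + 2 - q = (n + 1 - q) + 1 by omega, hbs]]
    rw [← this]
    push_cast
    ring
  -- S1 and S2
  have hS1 : (((n:ℝ)+1) * c (n+1)) * (((n:ℝ)+1) * c (n+1))
      = ∑ q ∈ range (n+2), ∑ p ∈ range (n+2), F p q := by
    rw [← hs1, Finset.sum_mul_sum]
    refine sum_congr rfl fun q hq => sum_congr rfl fun p hp => ?_
    rw [hFv]; ring
  have hS2 : ((n:ℝ) * c n) * (((n:ℝ)+2) * c (n+2))
      = ∑ q ∈ range (n+2), ∑ p ∈ range (n+2), G p q := by
    rw [← hs2, ← hs3, Finset.sum_mul_sum]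
    rw [Finset.sum_comm]
    refine sum_congr rfl fun q hq => sum_congr rfl fun p hp => ?_
    rw [hGv]; ring
  -- the correction sum X
  set W : ℕ → ℕ → ℝ := fun p q =>
    (g p * g q - g (p+1) * g (q-1)) * (b (n+1-p) * b (n+1-q) - b (n-p) * b (n+2-q)) with hWdef
  have hWv : ∀ p q, W p q = (g p * g q - g (p+1) * g (q-1)) *
      (b (n+1-p) * b (n+1-q) - b (n-p) * b (n+2-q)) := fun p q => rfl
  -- X ≥ 0 termwise
  have hWnn : ∀ q ∈ range (n+2), ∀ p ∈ range q, 0 ≤ W p q := by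
    intro q hq p hp
    have hpq : p < q := mem_range.mp hp
    have hq' : q ≤ n + 1 := Nat.lt_succ_iff.mp (mem_range.mp hq)
    rcases eq_or_lt_of_le (Nat.succ_le_of_lt hpq) with he | hlt
    · -- q = p + 1 : first factor vanishes
      rw [hWv, ← he]
      have : p + 1 - 1 = p := by omega
      rw [this]
      have hz : g p * g (p+1) - g (p+1) * g p = 0 := by ring
      rw [hz, zero_mul]
    · -- p + 2 ≤ q
      have h2 : p + 2 ≤ q := hlt
      have hf1 : g p * g q - g (p+1) * g (q-1) ≤ 0 := by
        have := g_ratio_mono hpos hLC p (q-1) (by omega)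
        rw [show q - 1 + 1 = q by omega] at this
        linarith [this]
      have hf2 : b (n+1-p) * b (n+1-q) - b (n-p) * b (n+2-q) ≤ 0 := by
        rcases eq_or_lt_of_le hq' with hqe | hqlt
        · -- q = n+1
          rw [hqe]
          have e : n + 1 - (n+1) = 0 := by omega
          rw [e, hb0, mul_zero]
          have : 0 ≤ b (n-p) * b (n+2-(n+1)) := mul_nonneg (hbnn _) (hbnn _)
          linarith
        · -- q ≤ n
          have hqn : q ≤ n := by omega
          have hpn : p + 2 ≤ n := by omega
          have eb1 : b (n+1-p) = c (n-p) := by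
            rw [show n+1-p = (n-p)+1 by omega, hbs]
          have eb2 : b (n+1-q) = c (n-q) := by
            rw [show n+1-q = (n-q)+1 by omega, hbs]
          have eb3 : b (n-p) = c (n-1-p) := by
            rw [show n-p = (n-1-p)+1 by omega, hbs]
          have eb4 : b (n+2-q) = c (n+1-q) := by
            rw [show n+2-q = (n+1-q)+1 by omega, hbs]
          rw [eb1, eb2, eb3, eb4]
          have hr := c_ratio hcpos (n - q) (n - 1 - p) (by omega)
            (fun i hi => ih i (by omega))
          rw [show n - 1 - p + 1 = n - p by omega,
              show n - q + 1 = n + 1 - q by omega] at hr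
          -- hr : c (n-q) * c (n-p) ≤ c (n+1-q) * c (n-1-p)
          nlinarith [hr]
      rw [hWv]
      nlinarith [hf1, hf2]
  have hXnn : 0 ≤ ∑ q ∈ range (n+2), ∑ p ∈ range q, W p q :=
    Finset.sum_nonneg fun q hq => Finset.sum_nonneg fun p hp => hWnn q hq p hp
  -- the identity : S1 = S2 + X + g 0 * c n * c (n+1)
  have hWFG : ∀ q ∈ range (n+2), ∀ p ∈ range q,
      W p q = F p q - G p q - G (q-1) (p+1) + F (p+1) (q-1) := by
    intro q hq p hp
    have hpq : p < q := mem_range.mp hp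
    have hq' : q ≤ n + 1 := Nat.lt_succ_iff.mp (mem_range.mp hq)
    rw [hWv, hFv, hFv, hGv, hGv,
      show n + 1 - (p+1) = n - p by omega,
      show n + 1 - (q-1) = n + 2 - q by omega,
      show n - (q-1) = n + 1 - q by omega,
      show n + 2 - (p+1) = n + 1 - p by omega]
    ring
  have hX : ∑ q ∈ range (n+2), ∑ p ∈ range q, W p q
      = (∑ q ∈ range (n+2), ∑ p ∈ range q, F p q)
        - (∑ q ∈ range (n+2), ∑ p ∈ range q, G p q)
        - (∑ q ∈ range (n+2), ∑ p ∈ range q, G (q-1) (p+1))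
        + (∑ q ∈ range (n+2), ∑ p ∈ range q, F (p+1) (q-1)) := by
    rw [← Finset.sum_sub_distrib, ← Finset.sum_sub_distrib, ← Finset.sum_add_distrib]
    refine sum_congr rfl fun q hq => ?_
    rw [← Finset.sum_sub_distrib, ← Finset.sum_sub_distrib, ← Finset.sum_add_distrib]
    exact sum_congr rfl fun p hp => hWFG q hq p hp
  -- A-lemmas
  have hFtop : ∀ p, F p (n+1) = 0 := by
    intro p
    rw [hFv, show n + 1 - (n+1) = 0 by omega, hb0, mul_zero]
  have hGtop : ∀ p q, n ≤ p → G p q = 0 := by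
    intro p q hp
    rw [hGv, show n - p = 0 by omega, hb0, mul_zero, zero_mul]
  have hA12 : (∑ q ∈ range (n+2), ∑ p ∈ range q, F p q)
      - (∑ q ∈ range (n+2), ∑ p ∈ range q, F (p+1) (q-1))
      = ∑ q ∈ range (n+1), (F 0 q - F q q - F (q+1) q) := by
    have e1 : ∑ q ∈ range (n+2), ∑ p ∈ range q, F p q
        = ∑ q ∈ range (n+1), ∑ p ∈ range q, F p q := by
      rw [Finset.sum_range_succ]
      have : ∑ p ∈ range (n+1), F p (n+1) = 0 :=
        Finset.sum_eq_zero fun p _ => hFtop p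
      rw [this, add_zero]
    have e2 : ∑ q ∈ range (n+2), ∑ p ∈ range q, F (p+1) (q-1)
        = ∑ q ∈ range (n+1), ((∑ p ∈ range q, F p q) + F q q + F (q+1) q - F 0 q) := by
      rw [Finset.sum_range_succ' (fun q => ∑ p ∈ range q, F (p+1) (q-1)) (n+1)]
      simp only [Finset.range_zero, Finset.sum_empty, add_zero]
      refine sum_congr rfl fun q hq => ?_
      have eq1 : ∑ p ∈ range (q+1), F (p+1) (q+1-1) = ∑ p ∈ range (q+1), F (p+1) q := by
        refine sum_congr rfl fun p hp => ?_
        rw [show q + 1 - 1 = q by omega]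
      rw [eq1, Finset.sum_range_succ]
      have eq2 : ∑ p ∈ range q, F (p+1) q = (∑ p ∈ range (q+1), F p q) - F 0 q := by
        rw [Finset.sum_range_succ' (fun p => F p q) q]
        ring
      rw [eq2, Finset.sum_range_succ]
      ring
    rw [e1, e2, ← Finset.sum_sub_distrib]
    refine sum_congr rfl fun q hq => ?_
    ring
  have hA43 : (∑ q ∈ range (n+2), ∑ p ∈ range q, G (q-1) (p+1))
      - (∑ q ∈ range (n+2), ∑ p ∈ range q, G q p)
      = ∑ q ∈ range (n+1), (G q q + G q (q+1) - G q 0) := by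
    have e1 : ∑ q ∈ range (n+2), ∑ p ∈ range q, G q p
        = ∑ q ∈ range (n+1), ∑ p ∈ range q, G q p := by
      rw [Finset.sum_range_succ]
      have : ∑ p ∈ range (n+1), G (n+1) p = 0 :=
        Finset.sum_eq_zero fun p _ => hGtop (n+1) p (by omega)
      rw [this, add_zero]
    have e2 : ∑ q ∈ range (n+2), ∑ p ∈ range q, G (q-1) (p+1)
        = ∑ q ∈ range (n+1), ((∑ p ∈ range q, G q p) + G q q + G q (q+1) - G q 0) := by
      rw [Finset.sum_range_succ' (fun q => ∑ p ∈ range q, G (q-1) (p+1)) (n+1)]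
      simp only [Finset.range_zero, Finset.sum_empty, add_zero]
      refine sum_congr rfl fun q hq => ?_
      have eq1 : ∑ p ∈ range (q+1), G (q+1-1) (p+1) = ∑ p ∈ range (q+1), G q (p+1) := by
        refine sum_congr rfl fun p hp => ?_
        rw [show q + 1 - 1 = q by omega]
      rw [eq1]
      have eq2 : ∑ p ∈ range (q+1), G q (p+1) = (∑ p ∈ range (q+2), G q p) - G q 0 := by
        rw [Finset.sum_range_succ' (fun p => G q p) (q+1)]
        ring
      rw [eq2, Finset.sum_range_succ, Finset.sum_range_succ]
      try ring
    rw [e1, e2, ← Finset.sum_sub_distrib]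
    refine sum_congr rfl fun q hq => ?_
    ring
  have hdiag : (∑ p ∈ range (n+2), F p p) - (∑ p ∈ range (n+2), G p p)
      = ∑ q ∈ range (n+1), (F q q - G q q) := by
    rw [Finset.sum_range_succ (fun p => F p p) (n+1), Finset.sum_range_succ (fun p => G p p) (n+1),
      hFtop (n+1), hGtop (n+1) (n+1) (by omega), add_zero, add_zero, ← Finset.sum_sub_distrib]
  have hFGq : ∀ q, F (q+1) q = G q (q+1) := by
    intro q
    rw [hFv, hGv, show n + 1 - (q+1) = n - q by omega,
      show n + 2 - (q+1) = n + 1 - q by omega]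
    ring
  have hboundary : ∑ q ∈ range (n+1), (F 0 q - G q 0) = g 0 * c n * c (n+1) := by
    have eF : ∑ q ∈ range (n+1), F 0 q
        = (g 0 * b (n+1)) * (((n:ℝ)+1) * c (n+1)) := by
      rw [hrec n, Finset.mul_sum]
      refine sum_congr rfl fun q hq => ?_
      have hq' : q ≤ n := Nat.lt_succ_iff.mp (mem_range.mp hq)
      rw [hFv, show n + 1 - 0 = n + 1 by omega,
        show n + 1 - q = (n - q) + 1 by omega]
      simp only [hbs]
      ring
    have eG : ∑ q ∈ range (n+1), G q 0
        = (g 0 * b (n+2)) * ((n:ℝ) * c n) := by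
      have hsum : ∑ q ∈ range (n+1), g q * b (n - q) = (n:ℝ) * c n := by
        have := hs2
        rw [Finset.sum_range_succ, show n - (n+1) = 0 by omega, hb0,
          mul_zero, add_zero] at this
        exact this
      rw [← hsum, Finset.mul_sum]
      refine sum_congr rfl fun q hq => ?_
      rw [hGv, show n + 2 - 0 = n + 2 by omega]
      ring
    have hbn1 : b (n+1) = c n := hbs n
    have hbn2 : b (n+2) = c (n+1) := hbs (n+1)
    rw [Finset.sum_sub_distrib, eF, eG, hbn1, hbn2]
    ring
  -- assemble the identity
  have hsq1 := sq_split (n+2) F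
  have hsq2 := sq_split (n+2) G
  have hFsymm : ∑ q ∈ range (n+2), ∑ p ∈ range q, F q p
      = ∑ q ∈ range (n+2), ∑ p ∈ range q, F p q := by
    refine sum_congr rfl fun q hq => sum_congr rfl fun p hp => ?_
    rw [hFv, hFv]; ring
  have hIdent : (((n:ℝ)+1) * c (n+1)) * (((n:ℝ)+1) * c (n+1))
      = ((n:ℝ) * c n) * (((n:ℝ)+2) * c (n+2))
        + (∑ q ∈ range (n+2), ∑ p ∈ range q, W p q) + g 0 * c n * c (n+1) := by
    rw [hS1, hS2, hX, hsq1, hsq2, hFsymm]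
    have expand : ∑ q ∈ range (n+1), (F 0 q - F q q - F (q+1) q)
        + ∑ q ∈ range (n+1), (G q q + G q (q+1) - G q 0)
        + ∑ q ∈ range (n+1), (F q q - G q q)
        = ∑ q ∈ range (n+1), (F 0 q - G q 0) := by
      rw [← Finset.sum_add_distrib, ← Finset.sum_add_distrib]
      refine sum_congr rfl fun q hq => ?_
      rw [hFGq q]
      ring
    have := hboundary
    rw [← expand] at this
    linarith [hA12, hA43, hdiag, this]
  -- conclude
  have hXpos := hXnn
  have key : (n:ℝ) * ((n:ℝ)+2) * (c n * c (n+2)) + g 0 * c n * c (n+1)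
      ≤ ((n:ℝ)+1)^2 * c (n+1)^2 := by
    nlinarith [hIdent, hXpos]
  have hUpn : c (n+2) ≤ g 0 * c (n+1) := hUp (n+1)
  have hprod : c n * c (n+2) ≤ g 0 * c n * c (n+1) := by
    nlinarith [mul_le_mul_of_nonneg_left hUpn (hcpos n).le]
  have hfin : ((n:ℝ)+1)^2 * (c n * c (n+2)) ≤ ((n:ℝ)+1)^2 * c (n+1)^2 := by
    nlinarith [key, hprod]
  have hn2 : (0:ℝ) < ((n:ℝ)+1)^2 := by positivity
  exact le_of_mul_le_mul_left hfin hn2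

theorem abstract_log_concave (hpos : ∀ j, 0 < g j)
    (hLC : ∀ j, g j * g (j+2) ≤ g (j+1)^2) (hg1 : g 1 ≤ g 0 ^ 2) (hc0 : c 0 = 1)
    (hrec : ∀ n : ℕ, ((n : ℝ) + 1) * c (n+1) = ∑ j ∈ range (n+1), g j * c (n - j)) :
    (∀ n, 0 < c n) ∧ (∀ n, c n * c (n+2) ≤ c (n+1)^2) := by
  have hcpos : ∀ n, 0 < c n := by
    intro n
    induction n using Nat.strong_induction_on with
    | _ n ih =>
      cases n with
      | zero => rw [hc0]; exact one_pos
      | succ n =>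
        have h := hrec n
        have hsum : 0 < ∑ j ∈ range (n+1), g j * c (n - j) := by
          refine Finset.sum_pos (fun j hj => mul_pos (hpos j) (ih (n - j) (by omega))) ?_
          exact Finset.nonempty_range_iff.mpr (Nat.succ_ne_zero n)
        have hn : (0:ℝ) < (n : ℝ) + 1 := by positivity
        by_contra hle
        push_neg at hle
        have : ((n:ℝ)+1) * c (n+1) ≤ 0 := mul_nonpos_of_nonneg_of_nonpos hn.le hle
        linarith
  have hUp : ∀ m, c (m+1) ≤ g 0 * c m := by
    intro m
    cases m with
    | zero =>
      have h := hrec 0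
      simp [hc0] at h
      rw [hc0]
      simpa using le_of_eq h
    | succ m =>
      have h2 := hrec (m+1)
      have h1 := hrec m
      have hsplit : ∑ j ∈ range (m+2), g j * c (m + 1 - j)
          = (∑ j ∈ range (m+1), g (j+1) * c (m - j)) + g 0 * c (m+1) := by
        rw [Finset.sum_range_succ' (fun j => g j * c (m + 1 - j)) (m+1)]
        congr 1
        refine sum_congr rfl fun j hj => ?_
        rw [show m + 1 - (j+1) = m - j by omega]
      have hterm : ∀ j ∈ range (m+1), g (j+1) * c (m - j) ≤ g 0 * (g j * c (m - j)) := by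
        intro j hj
        have := g_succ_le hpos hLC hg1 j
        nlinarith [hcpos (m - j), this]
      have hb : ∑ j ∈ range (m+1), g (j+1) * c (m - j)
          ≤ g 0 * (((m:ℝ)+1) * c (m+1)) := by
        rw [h1, Finset.mul_sum]
        exact Finset.sum_le_sum hterm
      have hm2 : (0:ℝ) < (m:ℝ) + 2 := by positivity
      have : ((m:ℝ)+2) * c (m+2) ≤ ((m:ℝ)+2) * (g 0 * c (m+1)) := by
        push_cast at h2
        calc ((m:ℝ)+2) * c (m+2) = ∑ j ∈ range (m+2), g j * c (m + 1 - j) := by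
              rw [← h2]; ring
        _ = (∑ j ∈ range (m+1), g (j+1) * c (m - j)) + g 0 * c (m+1) := hsplit
        _ ≤ g 0 * (((m:ℝ)+1) * c (m+1)) + g 0 * c (m+1) := by linarith [hb]
        _ = ((m:ℝ)+2) * (g 0 * c (m+1)) := by ring
      exact le_of_mul_le_mul_left this hm2
  refine ⟨hcpos, ?_⟩
  intro n
  induction n using Nat.strong_induction_on with
  | _ n ih => exact lc_step hpos hLC hc0 hcpos hrec hUp n ih

end Abstract

lemma ggc_one (j : ℕ) : ggc 1 j = 1 / j ! := by
  unfold ggc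
  rw [iteratedDeriv_deriv_expIter_one]

lemma ggc_rel (k j : ℕ) :
    ggc (k+1) j = ((j:ℝ)+1) * ccc (k+1) (j+1) * expIter (k+1) 0 := by
  unfold ggc ccc
  rw [← iteratedDeriv_succ']
  have hE : expIter (k+1) 0 ≠ 0 := (expIter_zero_pos k).ne'
  have hfac : ((j+1)! : ℝ) = ((j:ℝ)+1) * (j ! : ℝ) := by
    rw [Nat.factorial_succ]
    push_cast
    ring
  have h1 : (j ! : ℝ) ≠ 0 := by positivity
  rw [hfac]
  field_simp

lemma ggc_props : ∀ k : ℕ, 1 ≤ k →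
    (∀ j, 0 < ggc k j) ∧ (∀ j, ggc k j * ggc k (j+2) ≤ ggc k (j+1)^2)
      ∧ ggc k 1 ≤ (ggc k 0)^2 := by
  intro k
  induction k with
  | zero => intro h; omega
  | succ k ih =>
    intro _
    rcases Nat.eq_zero_or_pos k with hk0 | hk1
    · subst hk0
      refine ⟨fun j => by rw [ggc_one]; positivity, fun j => ?_, ?_⟩
      · rw [ggc_one, ggc_one, ggc_one]
        have h0 : (0:ℝ) < (j ! : ℝ) := by positivity
        have h1 : (0:ℝ) < ((j+1)! : ℝ) := by positivity
        have h2 : (0:ℝ) < ((j+2)! : ℝ) := by positivity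
        rw [div_mul_div_comm, one_mul, div_pow, one_pow,
          div_le_div_iff₀ (by positivity) (by positivity)]
        have e1 : ((j+1)! : ℝ) = ((j:ℝ)+1) * (j ! : ℝ) := by
          rw [Nat.factorial_succ]; push_cast; ring
        have e2 : ((j+2)! : ℝ) = ((j:ℝ)+2) * ((j+1)! : ℝ) := by
          rw [show j + 2 = (j+1) + 1 by omega, Nat.factorial_succ]
          push_cast; ring
        nlinarith [e1, e2, h0, h1]
      · rw [ggc_one, ggc_one]
        norm_num [Nat.factorial]
    · obtain ⟨hp, hlc, h1⟩ := ih hk1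
      obtain ⟨hcpos, hcLC⟩ := abstract_log_concave hp hlc h1 (ccc_zero k) (ccc_rec k)
      have hEpos : (0:ℝ) < expIter (k+1) 0 := expIter_zero_pos k
      refine ⟨fun j => ?_, fun j => ?_, ?_⟩
      · rw [ggc_rel]
        have : (0:ℝ) < (j:ℝ)+1 := by positivity
        exact mul_pos (mul_pos this (hcpos (j+1))) hEpos
      · rw [ggc_rel, ggc_rel, ggc_rel]
        have hL := hcLC (j+1)
        have c1 := hcpos (j+1)
        have c2 := hcpos (j+2)
        have c3 := hcpos (j+3)
        have hcoef : ((j:ℝ)+1) * ((j:ℝ)+3) ≤ ((j:ℝ)+2)^2 := by nlinarith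
        have hq : ccc (k+1) (j+1) * ccc (k+1) (j+3) ≤ ccc (k+1) (j+2)^2 := by
          have := hcLC (j+1)
          convert this using 3 <;> omega
        have e1 : j+2+1 = j+3 := rfl
        have e2 : j+1+1 = j+2 := rfl
        rw [e1, e2]
        push_cast
        nlinarith [mul_le_mul hcoef hq (by positivity) (by positivity),
          sq_nonneg (expIter (k+1) 0), mul_pos c1 c3, hEpos]
      · -- g 1 ≤ g 0 ^ 2 at level k+1
        have hc1 : ccc (k+1) 1 = ggc k 0 := by
          have h := ccc_rec k 0
          simp [ccc_zero k] at h
          linarith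
        have hc2 : 2 * ccc (k+1) 2 = ggc k 0 * ccc (k+1) 1 + ggc k 1 := by
          have h := ccc_rec k 1
          rw [Finset.sum_range_succ, Finset.sum_range_succ] at h
          simp [ccc_zero k] at h
          push_cast at h
          linarith
        have h2c : 2 * ccc (k+1) 2 ≤ 2 * (ccc (k+1) 1)^2 := by
          rw [hc2, hc1]
          nlinarith [h1]
        have hE2 : (2:ℝ) ≤ expIter (k+1) 0 := by
          obtain ⟨m, rfl⟩ : ∃ m, k = m + 1 := ⟨k - 1, by omega⟩
          exact two_le_expIter_zero m
        rw [ggc_rel, ggc_rel]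
        have c1 := hcpos 1
        have c2 := hcpos 2
        push_cast
        norm_num
        nlinarith [mul_le_mul_of_nonneg_right h2c hEpos.le,
          mul_nonneg (mul_nonneg (sq_nonneg (ccc (k+1) 1)) hEpos.le)
            (by linarith : (0:ℝ) ≤ expIter (k+1) 0 - 2)]

lemma bellOrd_eq_ccc (k n : ℕ) : bellOrd k n / (n ! : ℝ) = ccc k n := by
  unfold bellOrd BellB ccc
  rw [div_div]
  ring_nf

theorem bellOrd_div_factorial_log_concave (k : ℕ) (hk : 2 ≤ k) (n : ℕ) :
    (bellOrd k n / (n ! : ℝ)) * (bellOrd k (n + 2) / ((n + 2)! : ℝ)) ≤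
      (bellOrd k (n + 1) / ((n + 1)! : ℝ)) ^ 2 := by
  obtain ⟨K, rfl⟩ : ∃ K, k = K + 1 := ⟨k - 1, by omega⟩
  have hK : 1 ≤ K := by omega
  obtain ⟨hp, hlc, h1⟩ := ggc_props K hK
  obtain ⟨hcpos, hcLC⟩ := abstract_log_concave hp hlc h1 (ccc_zero K) (ccc_rec K)
  rw [bellOrd_eq_ccc, bellOrd_eq_ccc, bellOrd_eq_ccc]
  exact hcLC n
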